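/- For every integer n ≥ 1 and every real number θ with cos θ ≠ 0, the (2n−1)-st derivative of the tangent function at θ equals Σ_{j=1}^{n} (−4)^{n−j} (2j−1)! U(n,j) (1 + tan²θ)^j. -/
import Mathlib


open Finset

/-- The central factorial numbers of even indices `U(n,k)`, defined by the recurrence
`U(n,k) = U(n-1,k-1) + k^2 * U(n-1,k)` with `U(1,1) = 1` and `U(1,k) = 0` for `k ≠ 1`. -/
def U : ℕ → ℕ → ℤ
  | 0, _ => 0
  | 1, k => if k = 1 then 1 else 0
  | _ + 2, 0 => 0
  | n + 2, k + 1 => U (n + 1) k + ((k : ℤ) + 1) ^ 2 * U (n + 1) (k + 1)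

lemma U_zero_right : ∀ n, U n 0 = 0
  | 0 => rfl
  | 1 => rfl
  | _ + 2 => rfl

lemma U_zero_of_lt : ∀ n k, n < k → U n k = 0
  | 0, _, _ => rfl
  | 1, k, h => by
    have : k ≠ 1 := by omega
    simp [U, this]
  | n + 2, 0, h => by omega
  | n + 2, k + 1, h => by
    rw [U, U_zero_of_lt (n+1) k (by omega), U_zero_of_lt (n+1) (k+1) (by omega)]
    ring

/-- Coefficients -/
def a (n j : ℕ) : ℤ := (-4) ^ (n - j) * (2 * j - 1).factorial * U n j

lemma a_zero_right (n : ℕ) (hn : 1 ≤ n) : a n 0 = 0 := by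
  simp [a, U_zero_right]

lemma a_zero_of_lt (n j : ℕ) (h : n < j) : a n j = 0 := by
  simp [a, U_zero_of_lt n j h]

lemma U_succ_succ (n k : ℕ) (hn : 1 ≤ n) :
    U (n+1) (k+1) = U n k + ((k:ℤ)+1)^2 * U n (k+1) := by
  obtain ⟨m, rfl⟩ := Nat.exists_eq_add_of_le hn
  rw [Nat.add_comm 1 m]
  rfl

lemma a_rec (n j : ℕ) (hn : 1 ≤ n) (hj : j ≤ n) :
    a (n+1) (j+1) = 2*j*(2*j+1) * a n j - 4*((j:ℤ)+1)^2 * a n (j+1) := by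
  rcases Nat.eq_zero_or_pos j with rfl | hj1
  · rw [a, a, a, U_succ_succ n 0 hn, U_zero_right]
    have h1 : n + 1 - 1 = n := by omega
    have h2 : n - 1 + 1 = n := by omega
    rw [h1]
    simp only [Nat.mul_zero, Nat.zero_sub, Nat.mul_one]
    rw [← h2, pow_succ]
    push_cast
    ring
  · -- j ≥ 1
    have hfact : ((2 * (j+1) - 1).factorial : ℤ) = (2*j+1) * ((2*j) * ((2*j-1).factorial : ℤ)) := by
      have e1 : 2 * (j+1) - 1 = (2*j) + 1 := by omega
      have e2 : 2*j = (2*j - 1) + 1 := by omega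
      rw [e1, Nat.factorial_succ]
      nth_rewrite 2 [e2]
      rw [Nat.factorial_succ, ← e2]
      push_cast
      ring
    rcases Nat.lt_or_ge j n with hlt | hge
    · have e3 : n + 1 - (j+1) = n - j := by omega
      have e4 : n - j = (n - (j+1)) + 1 := by omega
      rw [a, a, a, U_succ_succ n j hn, e3, hfact]
      rw [e4, pow_succ]
      push_cast
      ring
    · obtain rfl : j = n := by omega
      rw [a, a, a, U_succ_succ j j hn, U_zero_of_lt j (j+1) (by omega)]
      simp only [Nat.sub_self, Nat.add_sub_cancel, pow_zero, hfact]
      push_cast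
      ring

open Polynomial in
noncomputable def DD (q : Polynomial ℝ) : Polynomial ℝ := (1 + X^2) * derivative q

noncomputable def p : ℕ → Polynomial ℝ
  | 0 => Polynomial.X
  | m + 1 => DD (p m)

open Polynomial

lemma DD_add (q r : ℝ[X]) : DD (q + r) = DD q + DD r := by
  simp [DD]; ring

lemma DD_sum {α : Type*} (s : Finset α) (f : α → ℝ[X]) :
    DD (∑ i ∈ s, f i) = ∑ i ∈ s, DD (f i) := by
  simp [DD, map_sum, Finset.mul_sum]

lemma DD_C_mul (c : ℝ) (q : ℝ[X]) : DD (C c * q) = C c * DD q := by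
  simp [DD]; ring

lemma DD_DD_pow (j : ℕ) :
    DD (DD ((1 + X^2)^j)) =
      C ((2*j)*(2*j+1) : ℝ) * (1 + X^2)^(j+1) - C (4*(j:ℝ)^2) * (1 + X^2)^j := by
  rcases j with _ | k
  · simp [DD]
  · have h1 : DD ((1 + X^2)^(k+1)) = C (2*(k+1) : ℝ) * X * (1 + X^2)^(k+1) := by
      rw [DD, derivative_pow]
      simp only [derivative_add, derivative_one, derivative_X_pow, Nat.add_sub_cancel]
      push_cast
      rw [pow_succ (1 + X^2) k]
      simp only [C_add, C_mul, C_1, map_ofNat, map_natCast, C_pow]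
      ring
    rw [h1, DD]
    simp only [derivative_mul, derivative_C, derivative_X, derivative_pow, derivative_add,
      derivative_one, derivative_X_pow, Nat.add_sub_cancel]
    rw [pow_succ (1 + X^2) (k+1), pow_succ (1 + X^2) k]
    push_cast
    simp only [C_add, C_mul, C_1, map_ofNat, map_natCast, C_pow]
    ring

lemma pB : ∀ n, 1 ≤ n →
    p (2*n-1) = ∑ j ∈ Finset.range (n+1), C ((a n j : ℤ) : ℝ) * (1 + X^2)^j := by
  intro n hn
  induction n, hn using Nat.le_induction with
  | base =>
    show DD (p 0) = _
    rw [Finset.sum_range_succ, Finset.sum_range_one]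
    have h0 : a 1 0 = 0 := a_zero_right 1 le_rfl
    have h1 : a 1 1 = 1 := by decide
    rw [h0, h1]
    simp [DD, p]
  | succ n hn ih =>
    have hidx : 2*(n+1)-1 = (2*n-1)+1+1 := by omega
    rw [hidx]
    show DD (DD (p (2*n-1))) = _
    rw [ih, DD_sum]
    simp only [DD_C_mul]
    rw [DD_sum]
    simp only [DD_C_mul, DD_DD_pow]
    set g : ℕ → ℝ[X] := fun j => C ((4*(j:ℝ)^2) * ((a n j : ℤ) : ℝ)) * (1+X^2)^j with hgdef
    have hterm : ∀ j, C ((a n j : ℤ) : ℝ) *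
        (C ((2*j)*(2*j+1) : ℝ) * (1 + X^2)^(j+1) - C (4*(j:ℝ)^2) * (1 + X^2)^j)
        = C ((a n j : ℤ) : ℝ) * C ((2*j)*(2*j+1) : ℝ) * (1 + X^2)^(j+1) - g j := by
      intro j
      rw [hgdef]
      simp only [C_mul]
      ring
    rw [Finset.sum_congr rfl (fun j _ => hterm j), Finset.sum_sub_distrib]
    have hg0 : g 0 = 0 := by simp [hgdef]
    have hgn : g (n+1) = 0 := by
      simp [hgdef, a_zero_of_lt n (n+1) (by omega)]
    have hg : ∑ j ∈ Finset.range (n+1), g j = ∑ j ∈ Finset.range (n+1), g (j+1) := by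
      have e1 := Finset.sum_range_succ' g (n+1)
      have e2 := Finset.sum_range_succ g (n+1)
      rw [hg0, add_zero] at e1
      rw [hgn, add_zero] at e2
      rw [← e2, e1]
    rw [hg, ← Finset.sum_sub_distrib]
    rw [Finset.sum_range_succ' (fun j => C ((a (n+1) j : ℤ) : ℝ) * (1+X^2)^j) (n+1)]
    rw [a_zero_right (n+1) (by omega)]
    simp only [Int.cast_zero, C_0, zero_mul, add_zero]
    refine Finset.sum_congr rfl fun j hj => ?_
    have hj' : j ≤ n := Nat.lt_succ_iff.mp (Finset.mem_range.mp hj)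
    have hrec : ((a (n+1) (j+1) : ℤ) : ℝ)
        = 2*(j:ℝ)*(2*(j:ℝ)+1) * ((a n j : ℤ) : ℝ) - 4*((j:ℝ)+1)^2 * ((a n (j+1) : ℤ) : ℝ) := by
      rw [a_rec n j hn hj']
      push_cast
      ring
    rw [hrec, hgdef]
    simp only [C_sub, C_mul, C_add, C_1, C_pow, map_ofNat, map_natCast]
    push_cast
    ring

lemma evalA (m : ℕ) : ∀ θ : ℝ, Real.cos θ ≠ 0 →
    iteratedDeriv m Real.tan θ = (p m).eval (Real.tan θ) := by
  induction m with
  | zero => intro θ h; simp [p]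
  | succ m ih =>
    intro θ h
    rw [iteratedDeriv_succ]
    have hopen : IsOpen {x : ℝ | Real.cos x ≠ 0} :=
      isOpen_ne.preimage Real.continuous_cos
    have hev : iteratedDeriv m Real.tan =ᶠ[nhds θ] fun x => (p m).eval (Real.tan x) :=
      Filter.eventuallyEq_of_mem (hopen.mem_nhds h) (fun x hx => ih x hx)
    rw [hev.deriv_eq]
    have hd : HasDerivAt (fun x => (p m).eval (Real.tan x))
        (Polynomial.eval (Real.tan θ) (Polynomial.derivative (p m)) * (1 / Real.cos θ ^ 2)) θ :=
      (Polynomial.hasDerivAt (p m) (Real.tan θ)).comp θ (Real.hasDerivAt_tan h)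
    rw [hd.deriv]
    show _ = Polynomial.eval (Real.tan θ) (DD (p m))
    have h1 : 1 / Real.cos θ ^ 2 = 1 + Real.tan θ ^ 2 := by
      rw [one_div, ← Real.inv_one_add_tan_sq h, inv_inv]
    rw [h1, DD]
    simp [eval_mul, eval_add, eval_one, eval_pow, eval_X]
    ring

/-- For `n ≥ 1` and `cos θ ≠ 0`, the `(2n-1)`-st derivative of `tan` at `θ` equals
`Σ_{j=1}^n (-4)^{n-j} (2j-1)! U(n,j) (1 + tan² θ)^j`. -/
theorem stmt11 (n : ℕ) (hn : 1 ≤ n) (θ : ℝ) (h : Real.cos θ ≠ 0) :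
    iteratedDeriv (2 * n - 1) Real.tan θ =
      ∑ j ∈ Finset.Icc 1 n,
        (-4 : ℝ) ^ (n - j) * ((2 * j - 1).factorial : ℝ) * (U n j : ℝ) *
          (1 + Real.tan θ ^ 2) ^ j := by
  rw [evalA _ θ h, pB n hn, eval_finset_sum]
  simp only [eval_mul, eval_C, eval_pow, eval_add, eval_one, eval_X]
  have hsub : Finset.Icc 1 n ⊆ Finset.range (n+1) := by
    intro x hx; simp only [Finset.mem_Icc, Finset.mem_range] at *; omega
  have hz : ∀ x ∈ Finset.range (n+1), x ∉ Finset.Icc 1 n →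
      ((a n x : ℤ) : ℝ) * (1 + Real.tan θ ^ 2) ^ x = 0 := by
    intro x hx hnx
    simp only [Finset.mem_Icc, Finset.mem_range] at hx hnx
    have : x = 0 := by omega
    subst this
    rw [a_zero_right n hn]
    simp
  rw [← Finset.sum_subset hsub hz]
  refine Finset.sum_congr rfl fun j _ => ?_
  rw [a]
  push_cast
  ring
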